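/- The capacity region of the K-receiver combination network with two nested messages — a common message M_{\overline{φ}} for all K receivers and a private message M_{\overline{K}} for receivers 1,...,K−1 — is exactly the set of nonnegative rate pairs (R_{\overline{K}}, R_{\overline{φ}}) satisfying R_{\overline{φ}} ≤ C_{W_K} and R_{\overline{φ}} + R_{\overline{K}} ≤ C_{W_j} for all j ∈ [1:K−1], where C_W = Σ_{S∈W} C_S. -/

import Mathlib

open Finset

/-- Achievability of a rate pair over the `K`-receiver combination network with
two nested messages: the private message (rate `R1`, `M_{\bar K}`) must be decoded
by receivers `0,…,K-2` (0-indexed) and the common message (rate `R2`, `M_{\barφ}`)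
by all `K` receivers.  The channel input has, for each nonempty `S ⊆ [1:K]`, a
component in `V S` observed noiselessly by exactly the receivers in `S`.
Achievability: for every `ε > 0` there exists a block code of some length `n`
with per-symbol rates at least `R1 - ε`, `R2 - ε` and average (uniform-message)
error probability at most `ε`. -/
def NestedOneCommonAchievable (K : ℕ)
    (V : {S : Finset (Fin K) // S.Nonempty} → Type)
    [∀ S, Fintype (V S)] (R1 R2 : ℝ) : Prop :=
  ∀ ε : ℝ, 0 < ε → ∃ (n M1 M2 : ℕ), 0 < n ∧ 0 < M1 ∧ 0 < M2 ∧
    R1 - ε ≤ Real.logb 2 M1 / n ∧ R2 - ε ≤ Real.logb 2 M2 / n ∧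
    ∃ (enc : Fin M1 → Fin M2 → Fin n → ∀ S : {S : Finset (Fin K) // S.Nonempty}, V S)
      (dec : ∀ i : Fin K,
        (Fin n → ∀ T : {S : {S : Finset (Fin K) // S.Nonempty} // i ∈ S.1}, V T.1) →
          Fin M1 × Fin M2),
      ((univ.filter (fun mm : Fin M1 × Fin M2 =>
          ¬ ((∀ i : Fin K, (i : ℕ) < K - 1 →
                (dec i (fun t T => enc mm.1 mm.2 t T.1)).1 = mm.1) ∧
             (∀ i : Fin K,
                (dec i (fun t T => enc mm.1 mm.2 t T.1)).2 = mm.2)))).card : ℝ) ≤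
        ε * (M1 * M2)


namespace Stmt13Aux

open Polynomial

variable {F : Type*} [Field F]

/-- low polynomial from coefficients -/
noncomputable def low (k : ℕ) (b : Fin k → F) : F[X] :=
  ∑ i : Fin k, C (b i) * X ^ (i : ℕ)

lemma degree_low_lt (k : ℕ) (b : Fin k → F) : (low k b).degree < (k : WithBot ℕ) := by
  refine lt_of_le_of_lt (Polynomial.degree_sum_le _ _) ?_
  rw [Finset.sup_lt_iff (by exact WithBot.bot_lt_coe k)]
  intro i _
  refine lt_of_le_of_lt (Polynomial.degree_C_mul_X_pow_le _ _) ?_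
  exact_mod_cast WithBot.coe_lt_coe.mpr i.2

lemma coeff_low (k : ℕ) (b : Fin k → F) (i : Fin k) : (low k b).coeff i = b i := by
  classical
  rw [low, Polynomial.finset_sum_coeff]
  rw [Finset.sum_eq_single i]
  · simp
  · intro j _ hji
    rw [Polynomial.coeff_C_mul, Polynomial.coeff_X_pow, if_neg (by simpa [Fin.val_eq_val] using (Ne.symm hji)),
      mul_zero]
  · simp

lemma low_injective (k : ℕ) : Function.Injective (low (F := F) k) := by
  intro b b' h
  funext i
  rw [← coeff_low k b i, ← coeff_low k b' i, h]

/-- the vanishing product -/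
noncomputable def ded (k2 : ℕ) (x : Fin k2 → F) : F[X] :=
  ∏ i : Fin k2, (X - C (x i))

lemma monic_ded (k2 : ℕ) (x : Fin k2 → F) : (ded k2 x).Monic :=
  monic_prod_of_monic _ _ fun i _ => monic_X_sub_C (x i)

lemma degree_ded (k2 : ℕ) (x : Fin k2 → F) : (ded k2 x).degree = (k2 : WithBot ℕ) := by
  rw [ded, Polynomial.degree_prod]
  simp

lemma eval_ded (k2 : ℕ) (x : Fin k2 → F) (j : Fin k2) : (ded k2 x).eval (x j) = 0 := by
  rw [ded, Polynomial.eval_prod]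
  exact Finset.prod_eq_zero (Finset.mem_univ j) (by simp)

/-- the encoding polynomial -/
noncomputable def epoly (k1 k2 : ℕ) (x : Fin k2 → F) (a : Fin k1 → F) (b : Fin k2 → F) : F[X] :=
  low k2 b + ded k2 x * low k1 a

lemma degree_epoly_lt (k1 k2 : ℕ) (x : Fin k2 → F) (a : Fin k1 → F) (b : Fin k2 → F) :
    (epoly k1 k2 x a b).degree < ((k1 + k2 : ℕ) : WithBot ℕ) := by
  refine lt_of_le_of_lt (Polynomial.degree_add_le _ _) (max_lt ?_ ?_)
  · exact lt_of_lt_of_le (degree_low_lt k2 b) (by exact_mod_cast WithBot.coe_le_coe.mpr (Nat.le_add_left _ _))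
  · refine lt_of_le_of_lt (Polynomial.degree_mul_le _ _) ?_
    rw [degree_ded]
    rcases eq_or_ne (low k1 a) 0 with h | h
    · simp [h]
    · have h1 : (low k1 a).degree < (k1 : WithBot ℕ) := degree_low_lt k1 a
      have : ((k2 : WithBot ℕ) + (low k1 a).degree) < (k2 : ℕ) + (k1 : ℕ) := by
        rcases Polynomial.degree_eq_natDegree h with hd
        rw [hd]
        norm_cast
        rw [hd] at h1
        norm_cast at h1
        omega
      refine lt_of_lt_of_le this ?_
      norm_cast
      omega

lemma epoly_injective (k1 k2 : ℕ) (x : Fin k2 → F) :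
    ∀ a b a' b', epoly k1 k2 x a b = epoly (F := F) k1 k2 x a' b' → a = a' ∧ b = b' := by
  intro a b a' b' h
  have hdlt : ∀ c : Fin k2 → F, (low k2 c).degree < (ded k2 x).degree := by
    intro c; rw [degree_ded]; exact degree_low_lt k2 c
  have h1 := Polynomial.div_modByMonic_unique (f := epoly k1 k2 x a b) (low k1 a) (low k2 b)
    (monic_ded k2 x) ⟨by rw [epoly], hdlt b⟩
  have h2 := Polynomial.div_modByMonic_unique (f := epoly k1 k2 x a' b') (low k1 a') (low k2 b')
    (monic_ded k2 x) ⟨by rw [epoly], hdlt b'⟩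
  rw [h] at h1
  exact ⟨low_injective k1 (h1.1.symm.trans h2.1),
    low_injective k2 (h1.2.symm.trans h2.2)⟩

lemma eval_epoly_ded (k1 k2 : ℕ) (x : Fin k2 → F) (a : Fin k1 → F) (b : Fin k2 → F) (j : Fin k2) :
    (epoly k1 k2 x a b).eval (x j) = (low k2 b).eval (x j) := by
  simp [epoly, eval_ded]

/-- If two encoding polynomials agree on all dedicated points, then b = b'. -/
lemma b_eq_of_eval_ded [IsDomain F] (k1 k2 : ℕ) (x : Fin k2 → F) (hx : Function.Injective x)
    (a a' : Fin k1 → F) (b b' : Fin k2 → F)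
    (h : ∀ j : Fin k2, (epoly k1 k2 x a b).eval (x j) = (epoly k1 k2 x a' b').eval (x j)) :
    b = b' := by
  have hv : ∀ j : Fin k2, (low k2 b - low k2 b').eval (x j) = 0 := by
    intro j
    have := h j
    rw [eval_epoly_ded, eval_epoly_ded] at this
    simp [this]
  have hz : low k2 b - low k2 b' = 0 := by
    rcases eq_or_ne (low k2 b - low k2 b') 0 with h0 | h0
    · exact h0
    · refine Polynomial.eq_zero_of_natDegree_lt_card_of_eval_eq_zero _ hx hv ?_
      rw [Fintype.card_fin]
      rw [Polynomial.natDegree_lt_iff_degree_lt h0]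
      refine lt_of_le_of_lt (Polynomial.degree_sub_le _ _) ?_
      exact max_lt (degree_low_lt k2 b) (degree_low_lt k2 b')
  exact low_injective k2 (sub_eq_zero.mp hz)

/-- If two encoding polynomials agree on at least k1+k2 distinct points, all equal. -/
lemma ab_eq_of_eval [IsDomain F] (k1 k2 : ℕ) (x : Fin k2 → F)
    {ι : Type*} [Fintype ι] {w : ι → F} (hw : Function.Injective w)
    (hcard : k1 + k2 ≤ Fintype.card ι)
    (a a' : Fin k1 → F) (b b' : Fin k2 → F)
    (h : ∀ z : ι, (epoly k1 k2 x a b).eval (w z) = (epoly k1 k2 x a' b').eval (w z)) :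
    a = a' ∧ b = b' := by
  have hz : epoly k1 k2 x a b - epoly k1 k2 x a' b' = 0 := by
    rcases eq_or_ne (epoly k1 k2 x a b - epoly k1 k2 x a' b') 0 with h0 | h0
    · exact h0
    · refine Polynomial.eq_zero_of_natDegree_lt_card_of_eval_eq_zero _ hw (fun z => by simp [h z]) ?_
      refine lt_of_lt_of_le ?_ hcard
      rw [Polynomial.natDegree_lt_iff_degree_lt h0]
      exact lt_of_le_of_lt (Polynomial.degree_sub_le _ _)
        (max_lt (degree_epoly_lt _ _ _ _ _) (degree_epoly_lt _ _ _ _ _))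
  exact epoly_injective k1 k2 x a b a' b' (sub_eq_zero.mp hz)

lemma param (Ct A ε : ℝ) (hCt : 0 ≤ Ct) (hA : 1 ≤ A) (hε : 0 < ε) :
    ∃ n p : ℕ, 0 < n ∧ p.Prime ∧ (n : ℝ) * Ct ≤ p ∧ A * Real.logb 2 (p : ℝ) / n ≤ ε := by
  have hlog2 : (0:ℝ) < Real.log 2 := Real.log_pos (by norm_num)
  set c : ℝ := Real.sqrt (2*Ct+4) with hc
  have hcpos : 0 < c := Real.sqrt_pos.mpr (by linarith)
  set B : ℝ := 2 * A * c / Real.log 2 with hB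
  have hBpos : 0 < B := by positivity
  set n : ℕ := max 1 ⌈(B/ε)^2⌉₊ with hn
  have hn1 : 1 ≤ n := le_max_left _ _
  have hnR : (1:ℝ) ≤ n := by exact_mod_cast hn1
  have hnpos : (0:ℝ) < n := by linarith
  obtain ⟨p, hp, hlt, hle⟩ := Nat.exists_prime_lt_and_le_two_mul (⌈(n:ℝ)*Ct⌉₊ + 1) (by omega)
  have hp2 : (2:ℝ) ≤ p := by exact_mod_cast hp.two_le
  have hppos : (0:ℝ) < p := by linarith
  refine ⟨n, p, by omega, hp, ?_, ?_⟩
  · have h1 : (n:ℝ)*Ct ≤ ⌈(n:ℝ)*Ct⌉₊ := Nat.le_ceil _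
    have h2 : ((⌈(n:ℝ)*Ct⌉₊ + 1 : ℕ) : ℝ) ≤ p := by exact_mod_cast Nat.le_of_lt hlt
    push_cast at h2
    linarith
  · have hlogp : Real.log p ≤ 2 * Real.sqrt p := by
      have h1 : Real.log (Real.sqrt p) = Real.log p / 2 := Real.log_sqrt (le_of_lt hppos)
      have h2 : Real.log (Real.sqrt p) ≤ Real.sqrt p - 1 :=
        Real.log_le_sub_one_of_pos (Real.sqrt_pos.mpr hppos)
      nlinarith [Real.sqrt_nonneg (p:ℝ)]
    have hpbound : (p:ℝ) ≤ (n:ℝ) * (2*Ct+4) := by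
      have h3 : (p:ℝ) ≤ 2*((⌈(n:ℝ)*Ct⌉₊:ℝ) + 1) := by exact_mod_cast hle
      have h4 : (⌈(n:ℝ)*Ct⌉₊:ℝ) < (n:ℝ)*Ct + 1 :=
        Nat.ceil_lt_add_one (by positivity)
      nlinarith
    have hsp : Real.sqrt p ≤ Real.sqrt (n:ℝ) * c := by
      rw [hc, ← Real.sqrt_mul (le_of_lt hnpos)]
      exact Real.sqrt_le_sqrt hpbound
    have e1 : A * Real.log p ≤ 2*A*c * Real.sqrt n := by
      nlinarith [Real.sqrt_nonneg (p:ℝ), Real.sqrt_nonneg (n:ℝ)]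
    have e2 : A * Real.logb 2 p ≤ B * Real.sqrt n := by
      calc A * Real.logb 2 p = (A * Real.log p) / Real.log 2 := by rw [Real.logb]; ring
        _ ≤ (2*A*c*Real.sqrt n) / Real.log 2 := by gcongr
        _ = B * Real.sqrt n := by rw [hB]; ring

    have hsqn : B ≤ ε * Real.sqrt n := by
      have h5 : ((B/ε)^2 : ℝ) ≤ n := by
        refine le_trans (Nat.le_ceil _) ?_
        exact_mod_cast Nat.cast_le.mpr (le_max_right 1 _)
      have h6 := Real.sqrt_le_sqrt h5
      rw [Real.sqrt_sq (by positivity)] at h6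
      rw [div_le_iff₀ hε] at h6
      linarith [h6]
    have hmulself : Real.sqrt (n:ℝ) * Real.sqrt (n:ℝ) = (n:ℝ) :=
      Real.mul_self_sqrt (le_of_lt hnpos)
    rw [div_le_iff₀ hnpos]
    nlinarith [Real.sqrt_nonneg (n:ℝ), e2, hsqn]


lemma cast_nat_sub_ge (a b : ℕ) : (a:ℝ) - b ≤ ((a - b : ℕ):ℝ) := by
  rcases le_total b a with h | h
  · rw [Nat.cast_sub h]
  · have h1 : a - b = 0 := Nat.sub_eq_zero_of_le h
    have h2 : (a:ℝ) ≤ b := Nat.cast_le.mpr h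
    rw [h1]
    simpa using by linarith

set_option maxHeartbeats 1000000 in
lemma achievable (K : ℕ) (hK : 2 ≤ K)
    (V : {S : Finset (Fin K) // S.Nonempty} → Type)
    [∀ S, Fintype (V S)] [∀ S, Nonempty (V S)]
    (R1 R2 : ℝ) (h1 : 0 ≤ R1) (h2 : 0 ≤ R2)
    (hb2 : R2 ≤ ∑ S ∈ univ.filter (fun S : {S : Finset (Fin K) // S.Nonempty} =>
              (⟨K - 1, Nat.sub_lt (by omega) Nat.one_pos⟩ : Fin K) ∈ S.1), Real.logb 2 (Fintype.card (V S)))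
    (hb1 : ∀ j : Fin K, (j : ℕ) < K - 1 →
         R2 + R1 ≤ ∑ S ∈ univ.filter (fun S : {S : Finset (Fin K) // S.Nonempty} =>
              j ∈ S.1), Real.logb 2 (Fintype.card (V S))) :
    NestedOneCommonAchievable K V R1 R2 := by
  classical
  intro ε hε
  set κ : Fin K := ⟨K - 1, Nat.sub_lt (by omega) Nat.one_pos⟩ with hκdef
  set c : {S : Finset (Fin K) // S.Nonempty} → ℝ :=
    fun S => Real.logb 2 (Fintype.card (V S)) with hcdef
  have hc0 : ∀ S, 0 ≤ c S := fun S =>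
    Real.logb_nonneg (by norm_num) (by exact_mod_cast Fintype.card_pos)
  set L : ℕ := Fintype.card {S : Finset (Fin K) // S.Nonempty} with hLdef
  set Ct : ℝ := ∑ S, c S with hCtdef
  have hCt0 : 0 ≤ Ct := Finset.sum_nonneg fun S _ => hc0 S
  have hA1 : (1:ℝ) ≤ (L:ℝ) + 1 := by
    have : (0:ℝ) ≤ (L:ℝ) := Nat.cast_nonneg L
    linarith
  obtain ⟨n, p, hn, hp, hpCt, hεp⟩ := param Ct ((L:ℝ)+1) ε hCt0 hA1 hε
  haveI : Fact p.Prime := ⟨hp⟩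
  have hp2 : (2:ℝ) ≤ p := by exact_mod_cast hp.two_le
  have hppos : (0:ℝ) < p := by linarith
  have hlb1 : 1 ≤ Real.logb 2 p := by
    have h0 : Real.logb 2 2 = 1 := Real.logb_self_eq_one (by norm_num)
    rw [← h0]
    exact Real.logb_le_logb_of_le (by norm_num) (by norm_num) hp2
  have hlbpos : 0 < Real.logb 2 p := by linarith
  have hnpos : (0:ℝ) < n := by exact_mod_cast hn
  have hεpn : ((L:ℝ)+1) * Real.logb 2 p ≤ ε * n := by
    rw [div_le_iff₀ hnpos] at hεp
    exact hεp
  set t : {S : Finset (Fin K) // S.Nonempty} → ℕ :=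
    fun S => ⌊(n:ℝ) * c S / Real.logb 2 p⌋₊ with htdef
  have hnn : ∀ r : ℝ, 0 ≤ r → 0 ≤ (n:ℝ) * r / Real.logb 2 p :=
    fun r hr => div_nonneg (mul_nonneg hnpos.le hr) hlbpos.le
  have ht_le : ∀ S, (t S : ℝ) * Real.logb 2 p ≤ (n:ℝ) * c S := by
    intro S
    have h := Nat.floor_le (R := ℝ) (a := (n:ℝ) * c S / Real.logb 2 p)
      (hnn _ (hc0 S))
    calc (t S:ℝ) * Real.logb 2 p
        ≤ ((n:ℝ) * c S / Real.logb 2 p) * Real.logb 2 p :=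
          mul_le_mul_of_nonneg_right h (le_of_lt hlbpos)
      _ = (n:ℝ) * c S := div_mul_cancel₀ _ (ne_of_gt hlbpos)
  have ht_ge : ∀ S, (n:ℝ) * c S / Real.logb 2 p - 1 ≤ (t S : ℝ) :=
    fun S => le_of_lt (Nat.sub_one_lt_floor _)
  -- (F1) embedding cardinality
  have hembed : ∀ S, p ^ (t S) ≤ (Fintype.card (V S)) ^ n := by
    intro S
    have hcard1 : (0:ℝ) < (Fintype.card (V S) : ℝ) := by exact_mod_cast Fintype.card_pos
    have h2 : ((p:ℝ)) ^ (t S) ≤ ((Fintype.card (V S) : ℝ)) ^ n := by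
      have e1 : (p:ℝ) ^ (t S) = (2:ℝ) ^ (Real.logb 2 p * (t S : ℝ)) := by
        rw [Real.rpow_mul (by norm_num : (0:ℝ) ≤ 2),
          Real.rpow_logb (by norm_num) (by norm_num) hppos, Real.rpow_natCast]
      have e2 : ((Fintype.card (V S) : ℝ)) ^ n = (2:ℝ) ^ (c S * (n:ℝ)) := by
        rw [hcdef, Real.rpow_mul (by norm_num : (0:ℝ) ≤ 2),
          Real.rpow_logb (by norm_num) (by norm_num) hcard1, Real.rpow_natCast]
      rw [e1, e2]
      apply Real.rpow_le_rpow_of_exponent_le (by norm_num)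
      calc Real.logb 2 p * (t S : ℝ) = (t S : ℝ) * Real.logb 2 p := by ring
        _ ≤ (n:ℝ) * c S := ht_le S
        _ = c S * (n:ℝ) := by ring
    exact_mod_cast h2
  -- cardinality of receiver position types
  have hsubsum : ∀ (i : Fin K) (f : {S : Finset (Fin K) // S.Nonempty} → ℕ),
      ∑ T : {S : {S : Finset (Fin K) // S.Nonempty} // i ∈ S.1}, f T.1
        = ∑ S ∈ univ.filter (fun S : {S : Finset (Fin K) // S.Nonempty} => i ∈ S.1), f S := by
    intro i f
    exact (Finset.sum_subtype _ (by simp) f).symm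
  have hcardPos : ∀ i : Fin K,
      Fintype.card (Σ T : {S : {S : Finset (Fin K) // S.Nonempty} // i ∈ S.1}, Fin (t T.1))
        = ∑ S ∈ univ.filter (fun S : {S : Finset (Fin K) // S.Nonempty} => i ∈ S.1), t S := by
    intro i
    rw [Fintype.card_sigma]
    simp only [Fintype.card_fin]
    exact hsubsum i t
  -- sum lower bound per receiver
  have hTbound : ∀ i : Fin K,
      (n:ℝ) * (∑ S ∈ univ.filter (fun S : {S : Finset (Fin K) // S.Nonempty} => i ∈ S.1), c S)
        / Real.logb 2 p
      ≤ ((∑ S ∈ univ.filter (fun S : {S : Finset (Fin K) // S.Nonempty} => i ∈ S.1), t S : ℕ) : ℝ)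
          + L := by
    intro i
    set F := univ.filter (fun S : {S : Finset (Fin K) // S.Nonempty} => i ∈ S.1) with hF
    have hh1 : ∑ S ∈ F, ((n:ℝ) * c S / Real.logb 2 p - 1) ≤ ∑ S ∈ F, (t S : ℝ) :=
      Finset.sum_le_sum fun S _ => ht_ge S
    have hh2 : ∑ S ∈ F, ((n:ℝ) * c S / Real.logb 2 p - 1)
        = (n:ℝ) * (∑ S ∈ F, c S) / Real.logb 2 p - F.card := by
      rw [Finset.sum_sub_distrib, Finset.sum_const, nsmul_eq_mul, mul_one]
      congr 1
      rw [Finset.mul_sum, Finset.sum_div]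
    have hh3 : (F.card : ℝ) ≤ L := by
      have := (Finset.card_filter_le univ
        (fun S : {S : Finset (Fin K) // S.Nonempty} => i ∈ S.1)).trans
        (le_of_eq Finset.card_univ)
      exact_mod_cast this
    have hh4 : ∑ S ∈ F, (t S:ℝ) = ((∑ S ∈ F, t S : ℕ):ℝ) := by push_cast; rfl
    linarith [hh1, hh3, hh4, hh2.le, hh2.ge]
  set k2 : ℕ := ⌊(n:ℝ) * R2 / Real.logb 2 p⌋₊ - L with hk2def
  set k1 : ℕ := ⌊(n:ℝ) * R1 / Real.logb 2 p⌋₊ - L with hk1def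
  -- (F4)
  have hk2le : k2 ≤ ∑ S ∈ univ.filter
      (fun S : {S : Finset (Fin K) // S.Nonempty} => κ ∈ S.1), t S := by
    have hfl : (⌊(n:ℝ)*R2/Real.logb 2 p⌋₊ : ℝ)
        ≤ ((∑ S ∈ univ.filter (fun S : {S : Finset (Fin K) // S.Nonempty} => κ ∈ S.1), t S : ℕ):ℝ)
          + L := by
      refine le_trans (Nat.floor_le (hnn _ h2)) (le_trans ?_ (hTbound κ))
      gcongr
    have hfl' : ⌊(n:ℝ)*R2/Real.logb 2 p⌋₊
        ≤ (∑ S ∈ univ.filter (fun S : {S : Finset (Fin K) // S.Nonempty} => κ ∈ S.1), t S) + L := by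
      exact_mod_cast hfl
    omega
  -- (F5)
  have hk12le : ∀ i : Fin K, (i:ℕ) < K - 1 → k1 + k2 ≤ ∑ S ∈ univ.filter
      (fun S : {S : Finset (Fin K) // S.Nonempty} => i ∈ S.1), t S := by
    intro i hi
    have hfl : (⌊(n:ℝ)*R1/Real.logb 2 p⌋₊ : ℝ) + (⌊(n:ℝ)*R2/Real.logb 2 p⌋₊ : ℝ)
        ≤ ((∑ S ∈ univ.filter (fun S : {S : Finset (Fin K) // S.Nonempty} => i ∈ S.1), t S : ℕ):ℝ)
          + L := by
      have hfloor1 : (⌊(n:ℝ)*R1/Real.logb 2 p⌋₊:ℝ) ≤ (n:ℝ)*R1/Real.logb 2 p :=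
        Nat.floor_le (hnn _ h1)
      have hfloor2 : (⌊(n:ℝ)*R2/Real.logb 2 p⌋₊:ℝ) ≤ (n:ℝ)*R2/Real.logb 2 p :=
        Nat.floor_le (hnn _ h2)
      have hsum : (n:ℝ)*R1/Real.logb 2 p + (n:ℝ)*R2/Real.logb 2 p
          = (n:ℝ)*(R2+R1)/Real.logb 2 p := by ring
      have hmid : (n:ℝ)*(R2+R1)/Real.logb 2 p
          ≤ (n:ℝ)*(∑ S ∈ univ.filter (fun S : {S : Finset (Fin K) // S.Nonempty} => i ∈ S.1), c S)
              / Real.logb 2 p := by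
        have hRC := hb1 i hi
        gcongr
      linarith [hTbound i]
    have hfl' : ⌊(n:ℝ)*R1/Real.logb 2 p⌋₊ + ⌊(n:ℝ)*R2/Real.logb 2 p⌋₊
        ≤ (∑ S ∈ univ.filter (fun S : {S : Finset (Fin K) // S.Nonempty} => i ∈ S.1), t S) + L := by
      exact_mod_cast hfl
    omega
  -- total nodes fit in ZMod p
  have htot : Fintype.card (Σ S : {S : Finset (Fin K) // S.Nonempty}, Fin (t S)) ≤ p := by
    have htotR : ((∑ S : {S : Finset (Fin K) // S.Nonempty}, t S : ℕ):ℝ) ≤ p := by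
      have he : ∀ S, (t S : ℝ) ≤ (n:ℝ) * c S := by
        intro S
        refine le_trans (Nat.floor_le (hnn _ (hc0 S))) ?_
        exact div_le_self (mul_nonneg hnpos.le (hc0 S)) hlb1
      calc ((∑ S : {S : Finset (Fin K) // S.Nonempty}, t S : ℕ):ℝ)
          = ∑ S : {S : Finset (Fin K) // S.Nonempty}, (t S : ℝ) := by push_cast; rfl
        _ ≤ ∑ S : {S : Finset (Fin K) // S.Nonempty}, (n:ℝ) * c S :=
            Finset.sum_le_sum fun S _ => he S
        _ = (n:ℝ) * Ct := by rw [hCtdef, Finset.mul_sum]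
        _ ≤ p := hpCt
    have : (∑ S : {S : Finset (Fin K) // S.Nonempty}, t S) ≤ p := by exact_mod_cast htotR
    rw [Fintype.card_sigma]
    simpa using this
  -- rate bounds
  have hrate : ∀ R : ℝ, 0 ≤ R →
      R - ε ≤ ((⌊(n:ℝ) * R / Real.logb 2 p⌋₊ - L : ℕ):ℝ) * Real.logb 2 p / n := by
    intro R hR
    have hkR : (n:ℝ)*R/Real.logb 2 p - ((L:ℝ)+1)
        ≤ ((⌊(n:ℝ) * R / Real.logb 2 p⌋₊ - L : ℕ):ℝ) := by
      have ha := cast_nat_sub_ge ⌊(n:ℝ) * R / Real.logb 2 p⌋₊ L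
      have hbb : (n:ℝ)*R/Real.logb 2 p - 1 < (⌊(n:ℝ)*R/Real.logb 2 p⌋₊:ℝ) :=
        Nat.sub_one_lt_floor _
      linarith
    rw [le_div_iff₀ hnpos]
    have e := mul_le_mul_of_nonneg_right hkR hlbpos.le
    rw [sub_mul, div_mul_cancel₀ _ (ne_of_gt hlbpos)] at e
    have hgoal : (R - ε) * (n:ℝ) = (n:ℝ)*R - ε*(n:ℝ) := by ring
    rw [hgoal]
    linarith [hεpn, e]
  -- the code
  set M1 : ℕ := p ^ k1 with hM1def
  set M2 : ℕ := p ^ k2 with hM2def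
  have hM1pos : 0 < M1 := pow_pos hp.pos k1
  have hM2pos : 0 < M2 := pow_pos hp.pos k2
  have hcard1 : Fintype.card (Fin M1) = Fintype.card (Fin k1 → ZMod p) := by
    rw [Fintype.card_fin, Fintype.card_fun, ZMod.card, Fintype.card_fin, hM1def]
  have hcard2 : Fintype.card (Fin M2) = Fintype.card (Fin k2 → ZMod p) := by
    rw [Fintype.card_fin, Fintype.card_fun, ZMod.card, Fintype.card_fin, hM2def]
  set e1 : Fin M1 ≃ (Fin k1 → ZMod p) := Fintype.equivOfCardEq hcard1 with he1
  set e2 : Fin M2 ≃ (Fin k2 → ZMod p) := Fintype.equivOfCardEq hcard2 with he2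
  obtain ⟨nodeE⟩ : Nonempty ((Σ S : {S : Finset (Fin K) // S.Nonempty}, Fin (t S)) ↪ ZMod p) :=
    Function.Embedding.nonempty_of_card_le (by rw [ZMod.card]; exact htot)
  have hφ : ∀ S : {S : Finset (Fin K) // S.Nonempty},
      Nonempty ((Fin (t S) → ZMod p) ↪ (Fin n → V S)) := by
    intro S
    refine Function.Embedding.nonempty_of_card_le ?_
    rw [Fintype.card_fun, Fintype.card_fun, ZMod.card, Fintype.card_fin, Fintype.card_fin]
    exact hembed S
  set φ : ∀ S : {S : Finset (Fin K) // S.Nonempty}, (Fin (t S) → ZMod p) ↪ (Fin n → V S) :=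
    fun S => Classical.choice (hφ S) with hφdef
  obtain ⟨ddE⟩ : Nonempty (Fin k2 ↪
      (Σ T : {S : {S : Finset (Fin K) // S.Nonempty} // κ ∈ S.1}, Fin (t T.1))) := by
    refine Function.Embedding.nonempty_of_card_le ?_
    rw [Fintype.card_fin, hcardPos κ]
    exact hk2le
  have hforget : ∀ i : Fin K, Function.Injective
      (fun σ : (Σ T : {S : {S : Finset (Fin K) // S.Nonempty} // i ∈ S.1}, Fin (t T.1)) =>
        (⟨σ.1.1, σ.2⟩ : Σ S : {S : Finset (Fin K) // S.Nonempty}, Fin (t S))) := by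
    intro i σ τ h
    obtain ⟨⟨S, hS⟩, j⟩ := σ
    obtain ⟨⟨S', hS'⟩, j'⟩ := τ
    injection h with h1 h2
    subst h1
    cases eq_of_heq h2
    rfl
  set x : Fin k2 → ZMod p := fun i => nodeE ⟨(ddE i).1.1, (ddE i).2⟩ with hxdef
  have hx : Function.Injective x := by
    intro i i' h
    exact ddE.injective (hforget κ (nodeE.injective h))
  set qq : Fin M1 → Fin M2 → (ZMod p)[X] :=
    fun m1 m2 => epoly k1 k2 x (e1 m1) (e2 m2) with hqqdef
  set enc : Fin M1 → Fin M2 → Fin n → ∀ S : {S : Finset (Fin K) // S.Nonempty}, V S :=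
    fun m1 m2 time S => φ S (fun j => (qq m1 m2).eval (nodeE ⟨S, j⟩)) time with hencdef
  set fobs : ∀ i : Fin K, Fin M1 × Fin M2 →
      (Fin n → ∀ T : {S : {S : Finset (Fin K) // S.Nonempty} // i ∈ S.1}, V T.1) :=
    fun i mm time T => enc mm.1 mm.2 time T.1 with hfobsdef
  haveI : Nonempty (Fin M1 × Fin M2) := ⟨(⟨0, hM1pos⟩, ⟨0, hM2pos⟩)⟩
  set dec : ∀ i : Fin K,
      (Fin n → ∀ T : {S : {S : Finset (Fin K) // S.Nonempty} // i ∈ S.1}, V T.1) →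
        Fin M1 × Fin M2 :=
    fun i y => Function.invFun (fobs i) y with hdecdef
  have hsame : ∀ (i : Fin K) (mm mm' : Fin M1 × Fin M2), fobs i mm' = fobs i mm →
      ∀ σ : (Σ T : {S : {S : Finset (Fin K) // S.Nonempty} // i ∈ S.1}, Fin (t T.1)),
        (qq mm'.1 mm'.2).eval (nodeE ⟨σ.1.1, σ.2⟩)
          = (qq mm.1 mm.2).eval (nodeE ⟨σ.1.1, σ.2⟩) := by
    intro i mm mm' h σ
    obtain ⟨T, j⟩ := σ
    have h1 : φ T.1 (fun j => (qq mm'.1 mm'.2).eval (nodeE ⟨T.1, j⟩))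
        = φ T.1 (fun j => (qq mm.1 mm.2).eval (nodeE ⟨T.1, j⟩)) := by
      funext time
      exact congrFun (congrFun h time) T
    exact congrFun ((φ T.1).injective h1) j
  have hfull : ∀ (i : Fin K), (i:ℕ) < K - 1 → ∀ mm mm' : Fin M1 × Fin M2,
      fobs i mm' = fobs i mm → mm' = mm := by
    intro i hi mm mm' h
    have hcard : k1 + k2 ≤ Fintype.card
        (Σ T : {S : {S : Finset (Fin K) // S.Nonempty} // i ∈ S.1}, Fin (t T.1)) := by
      rw [hcardPos i]
      exact hk12le i hi
    have hinj : Function.Injective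
        (fun σ : (Σ T : {S : {S : Finset (Fin K) // S.Nonempty} // i ∈ S.1}, Fin (t T.1)) =>
          nodeE ⟨σ.1.1, σ.2⟩) := by
      intro σ τ hh
      exact hforget i (nodeE.injective hh)
    have := ab_eq_of_eval k1 k2 x hinj hcard (e1 mm'.1) (e1 mm.1) (e2 mm'.2) (e2 mm.2)
      (hsame i mm mm' h)
    exact Prod.ext (e1.injective this.1) (e2.injective this.2)
  have hcommon : ∀ (i : Fin K) (mm mm' : Fin M1 × Fin M2),
      fobs i mm' = fobs i mm → mm'.2 = mm.2 := by
    intro i mm mm' h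
    by_cases hi : (i:ℕ) < K - 1
    · rw [hfull i hi mm mm' h]
    · have hiκ : i = κ := by
        apply Fin.ext
        have := i.isLt
        simp only [hκdef]
        omega
      have heval' : ∀ jj : Fin k2,
          (qq mm'.1 mm'.2).eval (x jj) = (qq mm.1 mm.2).eval (x jj) := by
        intro jj
        exact hsame κ mm mm' (by rw [← hiκ]; exact h) (ddE jj)
      have := b_eq_of_eval_ded k1 k2 x hx (e1 mm'.1) (e1 mm.1) (e2 mm'.2) (e2 mm.2) heval'
      exact e2.injective this
  refine ⟨n, M1, M2, hn, hM1pos, hM2pos, ?_, ?_, enc, dec, ?_⟩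
  · have : Real.logb 2 (M1 : ℝ) = (k1:ℝ) * Real.logb 2 p := by
      rw [hM1def]
      push_cast
      rw [Real.logb_pow]
    rw [this]
    exact hrate R1 h1
  · have : Real.logb 2 (M2 : ℝ) = (k2:ℝ) * Real.logb 2 p := by
      rw [hM2def]
      push_cast
      rw [Real.logb_pow]
    rw [this]
    exact hrate R2 h2
  · have hempty : (univ.filter (fun mm : Fin M1 × Fin M2 =>
          ¬ ((∀ i : Fin K, (i : ℕ) < K - 1 →
                (dec i (fun t T => enc mm.1 mm.2 t T.1)).1 = mm.1) ∧
             (∀ i : Fin K,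
                (dec i (fun t T => enc mm.1 mm.2 t T.1)).2 = mm.2)))) = ∅ := by
      rw [Finset.filter_eq_empty_iff]
      intro mm _
      rw [not_not]
      have hinv : ∀ i : Fin K, fobs i (dec i (fobs i mm)) = fobs i mm :=
        fun i => Function.invFun_eq ⟨mm, rfl⟩
      constructor
      · intro i hi
        have := hfull i hi mm (dec i (fobs i mm)) (hinv i)
        exact congrArg Prod.fst this
      · intro i
        exact hcommon i mm (dec i (fobs i mm)) (hinv i)
    rw [hempty]
    simp only [Finset.card_empty, Nat.cast_zero]
    positivity

lemma neg_logb_le {ε : ℝ} (h0 : 0 < ε) (h12 : ε ≤ 1/2) : -Real.logb 2 (1-ε) ≤ 4*ε := by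
  have h1 : (0:ℝ) < 1 - ε := by linarith
  have h2 : Real.log (1-ε)⁻¹ ≤ (1-ε)⁻¹ - 1 := Real.log_le_sub_one_of_pos (by positivity)
  have h3 : Real.log (1-ε)⁻¹ = -Real.log (1-ε) := Real.log_inv _
  have h4 : (1-ε)⁻¹ - 1 = ε/(1-ε) := by field_simp; ring
  have h5 : ε/(1-ε) ≤ 2*ε := by rw [div_le_iff₀ h1]; nlinarith
  have h6 : -Real.log (1-ε) ≤ 2*ε := by rw [← h3]; linarith
  have hl2 : (1/2:ℝ) ≤ Real.log 2 := by
    have := Real.log_two_gt_d9; linarith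
  have hlog2pos : (0:ℝ) < Real.log 2 := by linarith
  have h7 : 0 ≤ -Real.log (1-ε) := by
    have := Real.log_nonpos (by linarith : (0:ℝ) ≤ 1 - ε) (by linarith : 1 - ε ≤ 1)
    linarith
  rw [Real.logb]
  calc -(Real.log (1-ε)/Real.log 2) = (-Real.log (1-ε))/Real.log 2 := by ring
    _ ≤ (2*ε)/Real.log 2 := by
        exact (div_le_div_iff_of_pos_right hlog2pos).mpr h6
    _ ≤ (2*ε)/(1/2) := div_le_div_of_nonneg_left (by linarith) (by norm_num) hl2
    _ = 4*ε := by ring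

set_option maxHeartbeats 1000000 in
lemma converse (K : ℕ) (hK : 2 ≤ K)
    (V : {S : Finset (Fin K) // S.Nonempty} → Type)
    [∀ S, Fintype (V S)] [∀ S, Nonempty (V S)]
    (R1 R2 : ℝ) (hach : NestedOneCommonAchievable K V R1 R2) :
    (R2 ≤ ∑ S ∈ univ.filter (fun S : {S : Finset (Fin K) // S.Nonempty} =>
              (⟨K - 1, Nat.sub_lt (by omega) Nat.one_pos⟩ : Fin K) ∈ S.1),
            Real.logb 2 (Fintype.card (V S)) ∧
       ∀ j : Fin K, (j : ℕ) < K - 1 →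
         R2 + R1 ≤ ∑ S ∈ univ.filter (fun S : {S : Finset (Fin K) // S.Nonempty} =>
              j ∈ S.1),
            Real.logb 2 (Fintype.card (V S))) := by
  classical
  set κ : Fin K := ⟨K - 1, Nat.sub_lt (by omega) Nat.one_pos⟩ with hκdef
  have key : ∀ ε : ℝ, 0 < ε → ε ≤ 1/2 →
      (R2 ≤ (∑ S ∈ univ.filter (fun S : {S : Finset (Fin K) // S.Nonempty} => κ ∈ S.1),
            Real.logb 2 (Fintype.card (V S))) + 6*ε) ∧
      (∀ j : Fin K, (j : ℕ) < K - 1 →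
         R2 + R1 ≤ (∑ S ∈ univ.filter (fun S : {S : Finset (Fin K) // S.Nonempty} =>
              j ∈ S.1), Real.logb 2 (Fintype.card (V S))) + 6*ε) := by
    intro ε hε hε2
    obtain ⟨n, M1, M2, hn, hM1, hM2, hr1, hr2, enc, dec, herr⟩ := hach ε hε
    have hnpos : (0:ℝ) < n := by exact_mod_cast hn
    have hnR : (1:ℝ) ≤ n := by exact_mod_cast hn
    have hM1R : (1:ℝ) ≤ (M1:ℝ) := by exact_mod_cast hM1
    have hM2R : (1:ℝ) ≤ (M2:ℝ) := by exact_mod_cast hM2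
    have hM1pos : (0:ℝ) < (M1:ℝ) := by linarith
    have h1ε : (0:ℝ) < 1 - ε := by linarith
    have hneg : -Real.logb 2 (1-ε) ≤ 4*ε := neg_logb_le hε hε2
    have hr1' : (R1 - ε) * (n:ℝ) ≤ Real.logb 2 M1 := (le_div_iff₀ hnpos).mp hr1
    have hr2' : (R2 - ε) * (n:ℝ) ≤ Real.logb 2 M2 := (le_div_iff₀ hnpos).mp hr2
    -- the good set
    set G := univ.filter (fun mm : Fin M1 × Fin M2 =>
        ((∀ i : Fin K, (i : ℕ) < K - 1 →
             (dec i (fun t T => enc mm.1 mm.2 t T.1)).1 = mm.1) ∧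
         (∀ i : Fin K,
             (dec i (fun t T => enc mm.1 mm.2 t T.1)).2 = mm.2))) with hGdef
    set bad := univ.filter (fun mm : Fin M1 × Fin M2 =>
        ¬ ((∀ i : Fin K, (i : ℕ) < K - 1 →
              (dec i (fun t T => enc mm.1 mm.2 t T.1)).1 = mm.1) ∧
           (∀ i : Fin K,
              (dec i (fun t T => enc mm.1 mm.2 t T.1)).2 = mm.2))) with hbaddef
    have herr' : (bad.card : ℝ) ≤ ε * ((M1:ℝ) * M2) := by
      refine le_trans ?_ herr
      norm_num
    have hsubset : (univ : Finset (Fin M1 × Fin M2)) ⊆ G ∪ bad := by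
      intro mm _
      by_cases hmm : ((∀ i : Fin K, (i : ℕ) < K - 1 →
              (dec i (fun t T => enc mm.1 mm.2 t T.1)).1 = mm.1) ∧
           (∀ i : Fin K,
              (dec i (fun t T => enc mm.1 mm.2 t T.1)).2 = mm.2))
      · exact Finset.mem_union_left _ (Finset.mem_filter.mpr ⟨Finset.mem_univ _, hmm⟩)
      · exact Finset.mem_union_right _ (Finset.mem_filter.mpr ⟨Finset.mem_univ _, hmm⟩)
    have hcardsplit : M1 * M2 ≤ G.card + bad.card := by
      calc M1 * M2 = (univ : Finset (Fin M1 × Fin M2)).card := by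
            rw [Finset.card_univ, Fintype.card_prod, Fintype.card_fin, Fintype.card_fin]
        _ ≤ (G ∪ bad).card := Finset.card_le_card hsubset
        _ ≤ G.card + bad.card := Finset.card_union_le _ _
    have hGcard : (1 - ε) * ((M1:ℝ) * M2) ≤ (G.card : ℝ) := by
      have hc : ((M1 * M2 : ℕ):ℝ) ≤ (G.card:ℝ) + (bad.card:ℝ) := by exact_mod_cast hcardsplit
      push_cast at hc
      have hid : (1 - ε) * ((M1:ℝ) * M2) = (M1:ℝ)*M2 - ε*((M1:ℝ)*M2) := by ring
      rw [hid]
      linarith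
    -- log of observation space cardinality
    have hsubsumR : ∀ i : Fin K,
        (∑ T : {S : {S : Finset (Fin K) // S.Nonempty} // i ∈ S.1},
            Real.logb 2 (Fintype.card (V T.1)))
          = ∑ S ∈ univ.filter (fun S : {S : Finset (Fin K) // S.Nonempty} => i ∈ S.1),
              Real.logb 2 (Fintype.card (V S)) := by
      intro i
      exact (Finset.sum_subtype
        (p := fun S : {S : Finset (Fin K) // S.Nonempty} => i ∈ S.1)
        (univ.filter (fun S : {S : Finset (Fin K) // S.Nonempty} => i ∈ S.1))
        (fun x => by simp)
        (fun S => Real.logb 2 (Fintype.card (V S)))).symm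
    have hΩ : ∀ i : Fin K,
        Real.logb 2 ((Fintype.card
            (Fin n → ∀ T : {S : {S : Finset (Fin K) // S.Nonempty} // i ∈ S.1}, V T.1) : ℕ) : ℝ)
          = (n:ℝ) * ∑ S ∈ univ.filter
              (fun S : {S : Finset (Fin K) // S.Nonempty} => i ∈ S.1),
              Real.logb 2 (Fintype.card (V S)) := by
      intro i
      rw [Fintype.card_fun, Fintype.card_fin]
      push_cast
      rw [Real.logb_pow]
      congr 1
      rw [Fintype.card_pi]
      push_cast
      rw [Real.logb, Real.log_prod (fun T _ => by
        have : (0:ℝ) < (Fintype.card (V T.1) : ℝ) := by exact_mod_cast Fintype.card_pos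
        exact ne_of_gt this), Finset.sum_div]
      rw [← hsubsumR i]
      rfl
    -- part B : receiver κ
    constructor
    · set G2 := G.image Prod.snd with hG2def
      have hsub2 : G ⊆ (univ : Finset (Fin M1)) ×ˢ G2 := by
        intro mm hmm
        exact Finset.mem_product.mpr ⟨Finset.mem_univ _, Finset.mem_image_of_mem Prod.snd hmm⟩
      have hcard2 : G.card ≤ M1 * G2.card := by
        calc G.card ≤ ((univ : Finset (Fin M1)) ×ˢ G2).card := Finset.card_le_card hsub2
          _ = M1 * G2.card := by rw [Finset.card_product, Finset.card_univ, Fintype.card_fin]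
      have hG2card : (1 - ε) * (M2:ℝ) ≤ (G2.card : ℝ) := by
        have h9 : (M1:ℝ) * ((1-ε)*M2) ≤ (M1:ℝ) * G2.card := by
          calc (M1:ℝ) * ((1-ε)*M2) = (1-ε)*((M1:ℝ)*M2) := by ring
            _ ≤ (G.card : ℝ) := hGcard
            _ ≤ (M1:ℝ) * G2.card := by exact_mod_cast hcard2
        exact le_of_mul_le_mul_left h9 hM1pos
      haveI : Nonempty (Fin M1) := ⟨⟨0, hM1⟩⟩
      set pk : Fin M2 → Fin M1 := fun m2 =>
        if h : ∃ m1, (m1, m2) ∈ G then h.choose else Classical.arbitrary _ with hpkdef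
      have hpk : ∀ m2 ∈ G2, (pk m2, m2) ∈ G := by
        intro m2 hm2
        obtain ⟨mm, hmm, rfl⟩ := Finset.mem_image.mp hm2
        have hex : ∃ m1, (m1, mm.2) ∈ G := ⟨mm.1, by rwa [Prod.mk.eta]⟩
        rw [hpkdef]
        simp only [dif_pos hex]
        exact hex.choose_spec
      have hinj2 : Set.InjOn (fun m2 : Fin M2 =>
          (fun time (T : {S : {S : Finset (Fin K) // S.Nonempty} // κ ∈ S.1}) =>
            enc (pk m2) m2 time T.1)) ↑G2 := by
        intro m2 hm2 m2' hm2' heq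
        have g1 := (Finset.mem_filter.mp (hpk m2 (Finset.mem_coe.mp hm2))).2
        have g2 := (Finset.mem_filter.mp (hpk m2' (Finset.mem_coe.mp hm2'))).2
        have e1 : dec κ (fun t T => enc (pk m2) m2 t T.1)
            = dec κ (fun t T => enc (pk m2') m2' t T.1) := congrArg _ heq
        exact ((g1.2 κ).symm.trans (congrArg Prod.snd e1)).trans (g2.2 κ)
      have hcardle2 : G2.card ≤ Fintype.card
          (Fin n → ∀ T : {S : {S : Finset (Fin K) // S.Nonempty} // κ ∈ S.1}, V T.1) := by
        rw [← Finset.card_univ]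
        exact Finset.card_le_card_of_injOn _ (fun m2 _ => Finset.mem_univ _) hinj2
      have hchain : (1-ε) * (M2:ℝ) ≤ ((Fintype.card
          (Fin n → ∀ T : {S : {S : Finset (Fin K) // S.Nonempty} // κ ∈ S.1}, V T.1) : ℕ):ℝ) := by
        refine le_trans hG2card ?_
        exact_mod_cast hcardle2
      have hlogb := Real.logb_le_logb_of_le (by norm_num : (1:ℝ) < 2)
        (by positivity) hchain
      rw [Real.logb_mul (ne_of_gt h1ε) (ne_of_gt (by linarith : (0:ℝ) < (M2:ℝ))), hΩ κ] at hlogb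
      -- now : logb (1-ε) + logb M2 ≤ n * Cκ
      set Cκ := ∑ S ∈ univ.filter (fun S : {S : Finset (Fin K) // S.Nonempty} => κ ∈ S.1),
          Real.logb 2 (Fintype.card (V S)) with hCκdef
      rcases le_or_gt (R2 - ε - Cκ) 0 with hD | hD
      · linarith
      · have hmul : (R2 - ε - Cκ) ≤ (R2 - ε - Cκ) * n := le_mul_of_one_le_right hD.le hnR
        nlinarith [hr2', hlogb, hneg]
    -- part A : receivers j < K-1
    · intro j hj
      have hinj : Set.InjOn (fun mm : Fin M1 × Fin M2 =>
          (fun time (T : {S : {S : Finset (Fin K) // S.Nonempty} // j ∈ S.1}) =>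
            enc mm.1 mm.2 time T.1)) ↑G := by
        intro mm hmm mm' hmm' heq
        have g1 := (Finset.mem_filter.mp (Finset.mem_coe.mp hmm)).2
        have g2 := (Finset.mem_filter.mp (Finset.mem_coe.mp hmm')).2
        have e1 : dec j (fun t T => enc mm.1 mm.2 t T.1)
            = dec j (fun t T => enc mm'.1 mm'.2 t T.1) := congrArg _ heq
        apply Prod.ext
        · exact ((g1.1 j hj).symm.trans (congrArg Prod.fst e1)).trans (g2.1 j hj)
        · exact ((g1.2 j).symm.trans (congrArg Prod.snd e1)).trans (g2.2 j)
      have hcardle : G.card ≤ Fintype.card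
          (Fin n → ∀ T : {S : {S : Finset (Fin K) // S.Nonempty} // j ∈ S.1}, V T.1) := by
        rw [← Finset.card_univ]
        exact Finset.card_le_card_of_injOn _ (fun mm _ => Finset.mem_univ _) hinj
      have hchain : (1-ε) * ((M1:ℝ)*M2) ≤ ((Fintype.card
          (Fin n → ∀ T : {S : {S : Finset (Fin K) // S.Nonempty} // j ∈ S.1}, V T.1) : ℕ):ℝ) := by
        refine le_trans hGcard ?_
        exact_mod_cast hcardle
      have hlogb := Real.logb_le_logb_of_le (by norm_num : (1:ℝ) < 2)
        (by positivity) hchain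
      rw [Real.logb_mul (ne_of_gt h1ε) (by positivity), hΩ j,
        Real.logb_mul (ne_of_gt hM1pos) (ne_of_gt (by linarith : (0:ℝ) < (M2:ℝ)))] at hlogb
      set Cj := ∑ S ∈ univ.filter (fun S : {S : Finset (Fin K) // S.Nonempty} => j ∈ S.1),
          Real.logb 2 (Fintype.card (V S)) with hCjdef
      rcases le_or_gt (R1 + R2 - 2*ε - Cj) 0 with hD | hD
      · linarith
      · have hmul : (R1 + R2 - 2*ε - Cj) ≤ (R1 + R2 - 2*ε - Cj) * n :=
          le_mul_of_one_le_right hD.le hnR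
        nlinarith [hr1', hr2', hlogb, hneg]
  constructor
  · refine le_of_forall_pos_le_add ?_
    intro δ hδ
    have hε : 0 < min (δ/6) (1/2) := by positivity
    have h6 : 6 * min (δ/6) (1/2) ≤ δ := by
      have h1 : min (δ/6) (1/2) ≤ δ/6 := min_le_left _ _
      linarith
    have := (key _ hε (min_le_right _ _)).1
    linarith
  · intro j hj
    refine le_of_forall_pos_le_add ?_
    intro δ hδ
    have hε : 0 < min (δ/6) (1/2) := by positivity
    have h6 : 6 * min (δ/6) (1/2) ≤ δ := by
      have h1 : min (δ/6) (1/2) ≤ δ/6 := min_le_left _ _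
      linarith
    have := (key _ hε (min_le_right _ _)).2 j hj
    linarith

end Stmt13Aux

/-- The capacity region of the `K`-receiver combination network
with two nested messages (common message `M_{\barφ}` of rate `R2` for all receivers,
private message `M_{\bar K}` of rate `R1` for receivers `1,…,K-1`) is exactly the
set of nonnegative rate pairs with `R2 ≤ C_{W_K}` and `R2 + R1 ≤ C_{W_j}` for all
`j ∈ [1:K-1]`, where `C_W = ∑_{S ∈ W} log₂ |V S|` and receiver `K` is the
0-indexed `⟨K-1,_⟩`. -/
theorem stmt_13 (K : ℕ) (hK : 2 ≤ K)
    (V : {S : Finset (Fin K) // S.Nonempty} → Type)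
    [∀ S, Fintype (V S)] [∀ S, Nonempty (V S)]
    (R1 R2 : ℝ) (h1 : 0 ≤ R1) (h2 : 0 ≤ R2) :
    NestedOneCommonAchievable K V R1 R2 ↔
      (R2 ≤ ∑ S ∈ univ.filter (fun S : {S : Finset (Fin K) // S.Nonempty} =>
              (⟨K - 1, by omega⟩ : Fin K) ∈ S.1),
            Real.logb 2 (Fintype.card (V S)) ∧
       ∀ j : Fin K, (j : ℕ) < K - 1 →
         R2 + R1 ≤ ∑ S ∈ univ.filter (fun S : {S : Finset (Fin K) // S.Nonempty} =>
              j ∈ S.1),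
            Real.logb 2 (Fintype.card (V S))) := by
  constructor
  · intro hach
    exact Stmt13Aux.converse K hK V R1 R2 hach
  · rintro ⟨hb2, hb1⟩
    exact Stmt13Aux.achievable K hK V R1 R2 h1 h2 hb2 hb1
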